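/- Let E₀ > 0, Q₀ > 0, p_max > 0, K_min = log₂(1+p_max)/p_max, K_max = 1/ln 2. Suppose there exists a Lebesgue integrable p : [0, T] → [0, p_max] with ∫₀^T p dτ = E₀ - Ẽ and ∫₀^T log₂(1+p) dτ = Q₀ - Q̃ where 0 ≤ Ẽ < E₀ and 0 ≤ Q̃ < Q₀ and T < ∞. Then K_min ≤ (Q₀ - Q̃)/(E₀ - Ẽ) < K_max. Conversely, if 0 ≤ Ẽ < E₀, 0 ≤ Q̃ < Q₀ and K_min ≤ (Q₀ - Q̃)/(E₀ - Ẽ) < K_max, such a schedule exists. -/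

import Mathlib

open MeasureTheory

/-- chord bound from concavity: for 0 ≤ x ≤ b, (log(1+b)/b)·x ≤ log(1+x). -/
lemma chord_log (b : ℝ) (hb : 0 < b) {x : ℝ} (hx : 0 ≤ x) (hxb : x ≤ b) :
    Real.log (1 + b) / b * x ≤ Real.log (1 + x) := by
  have hcc : ConcaveOn ℝ (Set.Ioi 0) Real.log := strictConcaveOn_log_Ioi.concaveOn
  set l : ℝ := x / b with hl
  have hl0 : 0 ≤ l := by positivity
  have hl1 : l ≤ 1 := by rw [hl, div_le_one hb]; exact hxb
  have key := hcc.2 (Set.mem_Ioi.2 one_pos) (Set.mem_Ioi.2 (by linarith : (0:ℝ) < 1 + b))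
    (by linarith : 0 ≤ 1 - l) hl0 (by ring)
  have harg : (1 - l) • (1:ℝ) + l • (1 + b) = 1 + x := by
    simp only [smul_eq_mul, hl]; field_simp; ring
  rw [harg] at key
  simp only [smul_eq_mul, Real.log_one, mul_zero, zero_add] at key
  calc Real.log (1 + b) / b * x = l * Real.log (1 + b) := by rw [hl]; ring
    _ ≤ Real.log (1 + x) := key

/-- Reachable-set characterization: a schedule p : [0,T] → [0, p_max] with
∫p = E₀ - Et and ∫log₂(1+p) = Q₀ - Qt (0 ≤ Et < E₀, 0 ≤ Qt < Q₀) exists iff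
K_min ≤ (Q₀ - Qt)/(E₀ - Et) < K_max. -/
theorem reachable_set_characterization (E₀ Q₀ pmax : ℝ)
    (hE₀ : 0 < E₀) (hQ₀ : 0 < Q₀) (hpmax : 0 < pmax)
    (Et Qt : ℝ) (hEt : 0 ≤ Et) (hEt' : Et < E₀) (hQt : 0 ≤ Qt) (hQt' : Qt < Q₀) :
    ((∃ T : ℝ, 0 ≤ T ∧ ∃ p : ℝ → ℝ,
        (∀ t ∈ Set.Icc 0 T, p t ∈ Set.Icc 0 pmax) ∧
        IntegrableOn p (Set.Icc 0 T) ∧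
        (∫ t in Set.Icc 0 T, p t) = E₀ - Et ∧
        (∫ t in Set.Icc 0 T, Real.logb 2 (1 + p t)) = Q₀ - Qt) →
      Real.logb 2 (1 + pmax) / pmax ≤ (Q₀ - Qt) / (E₀ - Et) ∧
        (Q₀ - Qt) / (E₀ - Et) < 1 / Real.log 2) ∧
    ((Real.logb 2 (1 + pmax) / pmax ≤ (Q₀ - Qt) / (E₀ - Et) ∧
        (Q₀ - Qt) / (E₀ - Et) < 1 / Real.log 2) →
      ∃ T : ℝ, 0 ≤ T ∧ ∃ p : ℝ → ℝ,
        (∀ t ∈ Set.Icc 0 T, p t ∈ Set.Icc 0 pmax) ∧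
        IntegrableOn p (Set.Icc 0 T) ∧
        (∫ t in Set.Icc 0 T, p t) = E₀ - Et ∧
        (∫ t in Set.Icc 0 T, Real.logb 2 (1 + p t)) = Q₀ - Qt) := by
  have hlog2 : (0:ℝ) < Real.log 2 := Real.log_pos one_lt_two
  have hE : (0:ℝ) < E₀ - Et := by linarith
  have hQ : (0:ℝ) < Q₀ - Qt := by linarith
  constructor
  · -- forward direction
    rintro ⟨T, hT, p, hmem, hint, hEint, hQint⟩
    set s := Set.Icc (0:ℝ) T with hs
    have hsm : MeasurableSet s := measurableSet_Icc
    have hsfin : volume s < ⊤ := by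
      rw [hs, Real.volume_Icc]; exact ENNReal.ofReal_lt_top
    -- integrability of log(1+p)
    have hmeas : AEStronglyMeasurable (fun t => Real.log (1 + p t)) (volume.restrict s) := by
      exact (Real.measurable_log.comp_aemeasurable
        (aemeasurable_const.add hint.aemeasurable)).aestronglyMeasurable
    have hlogint : IntegrableOn (fun t => Real.log (1 + p t)) s := by
      refine Integrable.mono'
        ((integrableOn_const hsfin.ne) :
          IntegrableOn (fun _ => Real.log (1 + pmax)) s volume) hmeas ?_
      refine ae_restrict_of_forall_mem hsm fun t ht => ?_
      have h1 := (hmem t ht).1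
      have h2 := (hmem t ht).2
      have hpos : (0:ℝ) ≤ Real.log (1 + p t) := Real.log_nonneg (by linarith)
      rw [Real.norm_of_nonneg hpos]
      exact Real.log_le_log (by linarith) (by linarith)
    -- express logb integral
    have hQlog : (∫ t in s, Real.log (1 + p t)) = Real.log 2 * (Q₀ - Qt) := by
      have : (∫ t in s, Real.logb 2 (1 + p t)) =
          (∫ t in s, Real.log (1 + p t)) / Real.log 2 := by
        simp only [Real.logb]
        exact integral_div _ _
      rw [this] at hQint
      field_simp at hQint
      linarith [hQint]
    constructor
    · -- lower bound
      have hmono : (∫ t in s, Real.log (1 + pmax) / pmax * p t) ≤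
          ∫ t in s, Real.log (1 + p t) := by
        refine setIntegral_mono_on (hint.const_mul _) hlogint hsm fun t ht => ?_
        exact chord_log pmax hpmax (hmem t ht).1 (hmem t ht).2
      rw [integral_const_mul, hEint, hQlog] at hmono
      rw [div_mul_eq_mul_div, div_le_iff₀ hpmax] at hmono
      rw [Real.logb, div_div, div_le_div_iff₀ (by positivity) hE]
      nlinarith
    · -- strict upper bound
      by_contra hc
      push_neg at hc
      have hEQ : E₀ - Et ≤ Real.log 2 * (Q₀ - Qt) := by
        rw [div_le_div_iff₀ hlog2 hE] at hc
        nlinarith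
      set h : ℝ → ℝ := fun t => p t - Real.log (1 + p t) with hh
      have hhint : Integrable h (volume.restrict s) := hint.sub hlogint
      have hhnn : 0 ≤ᵐ[volume.restrict s] h := by
        refine ae_restrict_of_forall_mem hsm fun t ht => ?_
        have h1 := (hmem t ht).1
        have hle : Real.log (1 + p t) ≤ (1 + p t) - 1 :=
          Real.log_le_sub_one_of_pos (by linarith)
        simp only [hh, Pi.zero_apply]
        linarith
      have hint0 : (∫ t in s, h t) = 0 := by
        have hle : (∫ t in s, h t) ≤ 0 := by
          have : (∫ t in s, h t) = (E₀ - Et) - Real.log 2 * (Q₀ - Qt) := by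
            rw [hh]
            rw [integral_sub hint hlogint, hEint, hQlog]
          linarith [this, hEQ]
        have hge : 0 ≤ (∫ t in s, h t) :=
          setIntegral_nonneg hsm fun t ht => by
            have := hhnn
            have h1 := (hmem t ht).1
            have hle2 : Real.log (1 + p t) ≤ (1 + p t) - 1 :=
              Real.log_le_sub_one_of_pos (by linarith)
            simp only [hh]; linarith
        linarith
      have hzero : h =ᵐ[volume.restrict s] 0 :=
        (integral_eq_zero_iff_of_nonneg_ae hhnn hhint).1 hint0
      have hpzero : p =ᵐ[volume.restrict s] 0 := by
        filter_upwards [hzero, ae_restrict_of_forall_mem hsm hmem] with t h1 h2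
        simp only [hh, Pi.zero_apply] at h1 ⊢
        by_contra hne
        have hpt : 0 < p t := lt_of_le_of_ne h2.1 (Ne.symm hne)
        have := Real.log_lt_sub_one_of_pos (by linarith : (0:ℝ) < 1 + p t)
          (by linarith : (1:ℝ) + p t ≠ 1)
        linarith
      have : (∫ t in s, p t) = 0 := integral_eq_zero_of_ae hpzero
      rw [hEint] at this
      linarith
  · -- converse: construction
    rintro ⟨h1, h2⟩
    set E := E₀ - Et with hEdef
    set Q := Q₀ - Qt with hQdef
    have hQE : Q * Real.log 2 < E := by
      rw [div_lt_div_iff₀ hE hlog2] at h2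
      linarith
    set δ : ℝ := E / (Q * Real.log 2) - 1 with hδ
    have hδpos : 0 < δ := by
      rw [hδ, sub_pos, lt_div_iff₀ (by positivity)]
      linarith
    set a₀ : ℝ := min pmax (δ / 2) with ha₀
    have ha₀pos : 0 < a₀ := lt_min hpmax (half_pos hδpos)
    have ha₀le : a₀ ≤ pmax := min_le_left _ _
    set g : ℝ → ℝ := fun a => Real.logb 2 (1 + a) / a with hg
    have hgcont : ContinuousOn g (Set.Icc a₀ pmax) := by
      intro a ha
      have hapos : 0 < a := lt_of_lt_of_le ha₀pos ha.1
      apply ContinuousAt.continuousWithinAt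
      have hlogc : ContinuousAt (fun a : ℝ => Real.logb 2 (1 + a)) a := by
        simp only [Real.logb]
        exact ((Real.continuousAt_log (ne_of_gt (by linarith : (0:ℝ) < 1 + a))).comp
          ((continuous_const.add continuous_id').continuousAt)).div_const _
      exact hlogc.div continuousAt_id (ne_of_gt hapos)
    have hga₀ : Q / E < g a₀ := by
      have hlb : a₀ / (1 + a₀) ≤ Real.log (1 + a₀) := by
        have := Real.one_sub_inv_le_log_of_pos (by linarith : (0:ℝ) < 1 + a₀)
        have heq : 1 - (1 + a₀)⁻¹ = a₀ / (1 + a₀) := by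
          field_simp
          ring
        linarith [heq ▸ this]
      have hglb : 1 / ((1 + a₀) * Real.log 2) ≤ g a₀ := by
        rw [hg]
        simp only [Real.logb]
        rw [div_div, div_le_div_iff₀ (by positivity) (by positivity)]
        calc 1 * (Real.log 2 * a₀) = (a₀ / (1 + a₀)) * ((1 + a₀) * Real.log 2) := by
              field_simp
          _ ≤ Real.log (1 + a₀) * ((1 + a₀) * Real.log 2) := by
              apply mul_le_mul_of_nonneg_right hlb (by positivity)
      have hlt : Q / E < 1 / ((1 + a₀) * Real.log 2) := by
        rw [div_lt_div_iff₀ hE (by positivity)]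
        have ha₀δ : a₀ < δ := lt_of_le_of_lt (min_le_right _ _) (half_lt_self hδpos)
        have : (1 + a₀) < E / (Q * Real.log 2) := by
          rw [hδ] at ha₀δ; linarith
        rw [lt_div_iff₀ (by positivity)] at this
        nlinarith
      linarith
    have hgpm : g pmax ≤ Q / E := h1
    have hmem' : Q / E ∈ Set.Icc (g pmax) (g a₀) := ⟨hgpm, le_of_lt hga₀⟩
    obtain ⟨a, ha, hga⟩ := intermediate_value_Icc' ha₀le hgcont hmem'
    have hapos : 0 < a := lt_of_lt_of_le ha₀pos ha.1
    refine ⟨E / a, by positivity, fun _ => a, ?_, ?_, ?_, ?_⟩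
    · intro t _; exact ⟨le_of_lt hapos, ha.2⟩
    · exact integrableOn_const (by rw [Real.volume_Icc]; exact ENNReal.ofReal_lt_top.ne)
    · rw [setIntegral_const, Real.volume_real_Icc_of_le (div_pos hE hapos).le, sub_zero, smul_eq_mul]
      field_simp
    · rw [setIntegral_const, Real.volume_real_Icc_of_le (div_pos hE hapos).le, sub_zero, smul_eq_mul]
      have : Real.logb 2 (1 + a) = a * g a := by
        rw [hg]; field_simp
      rw [this, hga]
      field_simp
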